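/- Uniform minorization for the i-SIR kernel: assume ω = sup_x w(x)/λ(w) < ∞ and N ≥ 2. Define P_N(x, A) = ∫ Σᵢ (w(xⁱ)/Σⱼw(xʲ)) 1_A(xⁱ) with x¹ = x and x²,…,xᴺ i.i.d. ∼ λ. Then for every x ∈ X and A ∈ 𝒳, P_N(x, A) ≥ ε_N · π(A), where ε_N = (N−1)/(2ω + N − 2) and π(dy) = w(y)λ(dy)/λ(w). -/

import Mathlib

open MeasureTheory

private lemma prod_aux_one {M : Type*} [CommMonoid M] {N : ℕ} (i : Fin N) (F : Fin N → M)
    (hF : ∀ k, k ≠ i → F k = 1) : ∏ k, F k = F i :=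
  Finset.prod_eq_single i (fun b _ hb => hF b hb) (fun h => absurd (Finset.mem_univ i) h)

private lemma prod_aux_two {M : Type*} [CommMonoid M] {N : ℕ} {i j : Fin N} (hij : j ≠ i)
    (F : Fin N → M) (hF : ∀ k, k ≠ i → k ≠ j → F k = 1) : ∏ k, F k = F i * F j := by
  rw [← Finset.mul_prod_erase Finset.univ F (Finset.mem_univ i),
      ← Finset.mul_prod_erase _ F (Finset.mem_erase.mpr ⟨hij, Finset.mem_univ j⟩),
      Finset.prod_eq_one, mul_one]
  intro k hk
  simp only [Finset.mem_erase] at hk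
  exact hF k hk.2.1 hk.1

private lemma pi_int_one {X : Type*} [MeasurableSpace X] (lam : Measure X)
    [IsProbabilityMeasure lam] {N : ℕ} (i : Fin N) (g : X → ℝ) :
    ∫ v : Fin N → X, g (v i) ∂(Measure.pi fun _ => lam) = ∫ y, g y ∂lam := by
  letI : MeasureSpace X := ⟨lam⟩
  have h := MeasureTheory.integral_fintype_prod_eq_prod (ι := Fin N)
    (f := fun k => if k = i then g else fun _ => (1:ℝ)) (μ := fun _ => volume)
  calc ∫ v : Fin N → X, g (v i) ∂(Measure.pi fun _ => lam)
      = ∫ v : Fin N → X, ∏ k, (if k = i then g else fun _ => (1:ℝ)) (v k) := by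
        congr 1; funext v
        rw [prod_aux_one i _ (fun b hb => by simp [hb])]; simp
    _ = ∏ k, ∫ y, (if k = i then g else fun _ => (1:ℝ)) y := h
    _ = ∫ y, g y ∂lam := by
        rw [prod_aux_one i _ (fun b hb => by simp [hb])]; simp; rfl

private lemma pi_int_two {X : Type*} [MeasurableSpace X] (lam : Measure X)
    [IsProbabilityMeasure lam] {N : ℕ} {i j : Fin N} (hij : j ≠ i) (g h : X → ℝ) :
    ∫ v : Fin N → X, g (v i) * h (v j) ∂(Measure.pi fun _ => lam)
      = (∫ y, g y ∂lam) * (∫ y, h y ∂lam) := by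
  letI : MeasureSpace X := ⟨lam⟩
  have key := MeasureTheory.integral_fintype_prod_eq_prod (ι := Fin N)
    (f := fun k => if k = i then g else if k = j then h else fun _ => (1:ℝ)) (μ := fun _ => volume)
  calc ∫ v : Fin N → X, g (v i) * h (v j) ∂(Measure.pi fun _ => lam)
      = ∫ v : Fin N → X, ∏ k, (if k = i then g else if k = j then h else fun _ => (1:ℝ)) (v k) := by
        congr 1; funext v
        rw [prod_aux_two hij _ (fun k hk1 hk2 => by simp [hk1, hk2])]
        simp [hij]
    _ = ∏ k, ∫ y, (if k = i then g else if k = j then h else fun _ => (1:ℝ)) y := key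
    _ = (∫ y, g y ∂lam) * (∫ y, h y ∂lam) := by
        rw [prod_aux_two hij _ (fun k hk1 hk2 => by simp [hk1, hk2])]
        simp [hij]
        rfl

open MeasureTheory

private lemma isir_ineq_aux (g cv sv : ℝ) (hg : 0 ≤ g) (hcv : 0 < cv) (hsv : 0 < sv) :
    2 * (g / cv) - g / cv ^ 2 * sv ≤ g / sv := by
  rw [← sub_nonneg]
  have e : g / sv - (2 * (g / cv) - g / cv ^ 2 * sv)
      = (g * (cv - sv) ^ 2) / (cv ^ 2 * sv) := by
    field_simp
    ring
  rw [e]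
  exact div_nonneg (mul_nonneg hg (sq_nonneg _)) (by positivity)

set_option maxHeartbeats 1000000 in
theorem isir_minorization
    {X : Type*} [MeasurableSpace X] (lam : Measure X) [IsProbabilityMeasure lam]
    (w : X → ℝ) (hwm : Measurable w) (hw0 : ∀ x, 0 < w x) (hwint : Integrable w lam)
    (omg : ℝ) (homg : ∀ x, w x ≤ omg * ∫ z, w z ∂lam)
    (N : ℕ) (hN : 2 ≤ N) (x₀ : X) (A : Set X) (hA : MeasurableSet A) :
    ((N : ℝ) - 1) / (2 * omg + N - 2) * ((∫ y in A, w y ∂lam) / ∫ z, w z ∂lam)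
      ≤ ∫ v : Fin N → X,
          ∑ i, (w (Function.update v (⟨0, Nat.lt_of_lt_of_le Nat.zero_lt_two hN⟩ : Fin N) x₀ i) / ∑ j, w (Function.update v (⟨0, Nat.lt_of_lt_of_le Nat.zero_lt_two hN⟩ : Fin N) x₀ j)) *
            Set.indicator A (fun _ => (1 : ℝ)) (Function.update v (⟨0, Nat.lt_of_lt_of_le Nat.zero_lt_two hN⟩ : Fin N) x₀ i)
          ∂(Measure.pi fun _ => lam) := by
  have hN0 : 0 < N := Nat.lt_of_lt_of_le Nat.zero_lt_two hN
  set k0 : Fin N := ⟨0, Nat.lt_of_lt_of_le Nat.zero_lt_two hN⟩ with hk0def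
  set L : ℝ := ∫ z, w z ∂lam with hLdef
  set μ : Measure (Fin N → X) := Measure.pi fun _ => lam with hμdef
  haveI : IsProbabilityMeasure μ := by rw [hμdef]; infer_instance
  have hL : 0 < L := by
    rw [hLdef]
    rw [integral_pos_iff_support_of_nonneg (fun y => le_of_lt (hw0 y)) hwint]
    have : Function.support w = Set.univ := by
      ext y; simp [Function.support, ne_of_gt (hw0 y)]
    rw [this]
    simp
  have hN2 : (2:ℝ) ≤ (N:ℝ) := by exact_mod_cast hN
  have homg1 : 1 ≤ omg := by
    have h1 : L ≤ omg * L := by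
      calc L = ∫ z, w z ∂lam := hLdef
      _ ≤ ∫ _z, omg * L ∂lam := integral_mono hwint (integrable_const _) (fun z => homg z)
      _ = omg * L := by simp
    nlinarith
  set D : ℝ := 2 * omg + (N:ℝ) - 2 with hDdef
  have hD : 0 < D := by rw [hDdef]; nlinarith
  have hDL : 0 < D * L := mul_pos hD hL
  set E := Finset.univ.erase k0 with hEdef
  have hcardEn : E.card = N - 1 := by
    rw [hEdef, Finset.card_erase_of_mem (Finset.mem_univ _), Finset.card_univ, Fintype.card_fin]
  have hcardE : (E.card : ℝ) = (N:ℝ) - 1 := by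
    have h1N : 1 ≤ N := hN0
    rw [hcardEn, Nat.cast_sub h1N]; simp
  set indA := A.indicator (fun _ => (1:ℝ)) with hindAdef
  have hind0 : ∀ y, 0 ≤ indA y := fun y => by
    rw [hindAdef]; by_cases h : y ∈ A <;> simp [h]
  have hind1 : ∀ y, indA y ≤ 1 := fun y => by
    rw [hindAdef]; by_cases h : y ∈ A <;> simp [h]
  have hindm : Measurable indA := by rw [hindAdef]; exact measurable_const.indicator hA
  set G : X → ℝ := fun y => w y * indA y with hGdef
  have hGm : Measurable G := hwm.mul hindm
  have hG0 : ∀ y, 0 ≤ G y := fun y => mul_nonneg (le_of_lt (hw0 y)) (hind0 y)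
  have hGw : ∀ y, G y ≤ w y := fun y => by
    have h1 := hind1 y; have h2 := hw0 y; have h3 := hind0 y
    show w y * indA y ≤ w y
    nlinarith
  have hwL : ∀ y, w y ≤ omg * L := fun y => homg y
  set c : X → ℝ := fun y => w x₀ + w y + ((N:ℝ) - 2) * L with hcdef
  have hcm : Measurable c := (measurable_const.add hwm).add measurable_const
  have hc0 : ∀ y, 0 < c y := fun y => by
    have := hw0 x₀; have := hw0 y
    show 0 < w x₀ + w y + ((N:ℝ) - 2) * L
    nlinarith
  have hcw : ∀ y, w y ≤ c y := fun y => by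
    have := hw0 x₀
    show w y ≤ w x₀ + w y + ((N:ℝ) - 2) * L
    nlinarith
  have hcx : ∀ y, w x₀ ≤ c y := fun y => by
    have := hw0 y
    show w x₀ ≤ w x₀ + w y + ((N:ℝ) - 2) * L
    nlinarith
  have hcD : ∀ y, c y ≤ D * L := fun y => by
    have := hwL x₀; have := hwL y
    show w x₀ + w y + ((N:ℝ) - 2) * L ≤ (2 * omg + (N:ℝ) - 2) * L
    nlinarith
  set S : (Fin N → X) → ℝ := fun v => w x₀ + ∑ j ∈ E, w (v j) with hSdef
  have hSm : Measurable S := by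
    exact measurable_const.add (Finset.measurable_sum _ fun j _ => hwm.comp (measurable_pi_apply j))
  have hS0 : ∀ v, 0 < S v := fun v => by
    show 0 < w x₀ + ∑ j ∈ E, w (v j)
    have : (0:ℝ) ≤ ∑ j ∈ E, w (v j) :=
      Finset.sum_nonneg fun j _ => le_of_lt (hw0 _)
    have := hw0 x₀; linarith
  have hSx : ∀ v, w x₀ ≤ S v := fun v => by
    show w x₀ ≤ w x₀ + ∑ j ∈ E, w (v j)
    have : (0:ℝ) ≤ ∑ j ∈ E, w (v j) :=
      Finset.sum_nonneg fun j _ => le_of_lt (hw0 _)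
    linarith
  have hSw : ∀ v, ∀ i ∈ E, w (v i) ≤ S v := fun v i hi => by
    show w (v i) ≤ w x₀ + ∑ j ∈ E, w (v j)
    have h1 : w (v i) ≤ ∑ j ∈ E, w (v j) :=
      Finset.single_le_sum (fun j _ => le_of_lt (hw0 (v j))) hi
    have := hw0 x₀; linarith
  have hupd : ∀ v : Fin N → X, (∑ j, w (Function.update v k0 x₀ j)) = S v := by
    intro v
    calc (∑ j, w (Function.update v k0 x₀ j))
        = ∑ j, (if j = k0 then w x₀ else w (v j)) := by
          refine Finset.sum_congr rfl fun j _ => ?_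
          rw [Function.update_apply]
          split <;> rfl
      _ = (if k0 = k0 then w x₀ else w (v k0)) + ∑ j ∈ E, (if j = k0 then w x₀ else w (v j)) := by
          rw [hEdef, Finset.add_sum_erase _ (fun j => if j = k0 then w x₀ else w (v j))
            (Finset.mem_univ k0)]
      _ = S v := by
          rw [if_pos rfl]
          show _ = w x₀ + ∑ j ∈ E, w (v j)
          congr 1
          exact Finset.sum_congr rfl fun j hj => if_neg (Finset.ne_of_mem_erase hj)
  have intb : ∀ (f : (Fin N → X) → ℝ) (C : ℝ), Measurable f → (∀ v, |f v| ≤ C) →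
      Integrable f μ := fun f C hf hb =>
    (integrable_const C).mono' hf.aestronglyMeasurable
      (ae_of_all _ fun v => by simpa [Real.norm_eq_abs] using hb v)
  have intbl : ∀ (f : X → ℝ) (C : ℝ), Measurable f → (∀ y, |f y| ≤ C) →
      Integrable f lam := fun f C hf hb =>
    (integrable_const C).mono' hf.aestronglyMeasurable
      (ae_of_all _ fun v => by simpa [Real.norm_eq_abs] using hb v)
  -- the terms of the sum
  set T : Fin N → (Fin N → X) → ℝ :=
    fun i v => if i = k0 then (w x₀ / S v) * indA x₀ else G (v i) / S v with hTdef
  have hTm : ∀ i, Measurable (T i) := by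
    intro i
    rw [hTdef]
    by_cases hik : i = k0
    · simp only [if_pos hik]
      exact (measurable_const.div hSm).mul measurable_const
    · simp only [if_neg hik]
      exact (hGm.comp (measurable_pi_apply i)).div hSm
  have hT0 : ∀ i v, 0 ≤ T i v := by
    intro i v
    rw [hTdef]
    by_cases hik : i = k0
    · simp only [if_pos hik]
      exact mul_nonneg (div_nonneg (le_of_lt (hw0 x₀)) (le_of_lt (hS0 v))) (hind0 x₀)
    · simp only [if_neg hik]
      exact div_nonneg (hG0 _) (le_of_lt (hS0 v))
  have hT1 : ∀ i v, T i v ≤ 1 := by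
    intro i v
    rw [hTdef]
    by_cases hik : i = k0
    · simp only [if_pos hik]
      have h1 : w x₀ / S v ≤ 1 := (div_le_one (hS0 v)).mpr (hSx v)
      have h2 := hind0 x₀; have h3 := hind1 x₀
      have h0 : 0 ≤ w x₀ / S v := div_nonneg (le_of_lt (hw0 x₀)) (le_of_lt (hS0 v))
      nlinarith
    · simp only [if_neg hik]
      refine (div_le_one (hS0 v)).mpr ?_
      exact le_trans (hGw (v i)) (hSw v i (Finset.mem_erase.mpr ⟨hik, Finset.mem_univ i⟩))
  have hTb : ∀ i v, |T i v| ≤ 1 := fun i v => abs_le.mpr ⟨by linarith [hT0 i v], hT1 i v⟩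
  have hTint : ∀ i, Integrable (T i) μ := fun i => intb _ 1 (hTm i) (hTb i)
  -- rewrite the goal's integral
  have hgoal : (∫ v : Fin N → X,
          ∑ i, (w (Function.update v k0 x₀ i) / ∑ j, w (Function.update v k0 x₀ j)) *
            indA (Function.update v k0 x₀ i) ∂μ) = ∑ i, ∫ v, T i v ∂μ := by
    rw [← integral_finset_sum _ (fun i _ => hTint i)]
    congr 1; funext v
    refine Finset.sum_congr rfl fun i _ => ?_
    rw [hupd v]
    by_cases hik : i = k0
    · subst hik
      show _ = (if k0 = k0 then w x₀ / S v * indA x₀ else G (v k0) / S v)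
      rw [if_pos rfl, Function.update_self]
    · show _ = (if i = k0 then w x₀ / S v * indA x₀ else G (v i) / S v)
      rw [if_neg hik, Function.update_of_ne hik]
      show w (v i) / S v * indA (v i) = w (v i) * indA (v i) / S v
      ring
  rw [hgoal]
  -- lower bound each term with i ≠ k0
  set B : ℝ := (∫ y in A, w y ∂lam) / (D * L) with hBdef
  have hGind : ∀ y, G y = A.indicator w y := fun y => by
    by_cases h : y ∈ A <;> simp [hGdef, hindAdef, h]
  have hintG : ∫ y, G y ∂lam = ∫ y in A, w y ∂lam := by
    rw [show G = A.indicator w from funext hGind, integral_indicator hA]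
  have hkey : ∀ i ∈ E, B ≤ ∫ v, T i v ∂μ := by
    intro i hi
    have hik : i ≠ k0 := (Finset.mem_erase.mp hi).1
    have hTi : ∀ v, T i v = G (v i) / S v := fun v => by
      show (if i = k0 then w x₀ / S v * indA x₀ else G (v i) / S v) = _
      rw [if_neg hik]
    set H : X → ℝ := fun y => G y / (c y)^2 with hHdef
    have hHm : Measurable H := hGm.div (hcm.pow_const 2)
    have hH0 : ∀ y, 0 ≤ H y := fun y => div_nonneg (hG0 y) (le_of_lt (pow_pos (hc0 y) 2))
    have hHb : ∀ y, H y ≤ 1 / w x₀ := fun y => by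
      show G y / (c y)^2 ≤ 1 / w x₀
      rw [div_le_div_iff₀ (pow_pos (hc0 y) 2) (hw0 x₀)]
      have h1 : G y ≤ c y := le_trans (hGw y) (hcw y)
      have h2 := hcx y; have h3 := hc0 y; have h4 := hw0 x₀
      nlinarith
    have hGc1 : ∀ y, G y / c y ≤ 1 := fun y => by
      rw [div_le_one (hc0 y)]; exact le_trans (hGw y) (hcw y)
    have hGc0 : ∀ y, 0 ≤ G y / c y := fun y => div_nonneg (hG0 y) (le_of_lt (hc0 y))
    have intGc : Integrable (fun y => G y / c y) lam :=
      intbl _ 1 (hGm.div hcm) (fun y => abs_le.mpr ⟨by linarith [hGc0 y], hGc1 y⟩)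
    have intH : Integrable H lam := intbl _ (1 / w x₀) hHm
      (fun y => abs_le.mpr ⟨by
        have := le_of_lt (div_pos one_pos (hw0 x₀)); linarith [hH0 y], hHb y⟩)
    have hCnn : 0 ≤ (1 / w x₀) * (omg * L) :=
      mul_nonneg (le_of_lt (div_pos one_pos (hw0 x₀)))
        (mul_nonneg (by linarith) (le_of_lt hL))
    have hHwabs : ∀ a b : X, |H a * w b| ≤ (1 / w x₀) * (omg * L) := fun a b => abs_le.mpr
      ⟨le_trans (neg_nonpos_of_nonneg hCnn) (mul_nonneg (hH0 a) (le_of_lt (hw0 b))),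
       mul_le_mul (hHb a) (hwL b) (le_of_lt (hw0 b)) (le_of_lt (div_pos one_pos (hw0 x₀)))⟩
    have intHw : Integrable (fun y => H y * w y) lam :=
      intbl _ ((1 / w x₀) * (omg * L)) (hHm.mul hwm) (fun y => hHwabs y y)
    have intHx : Integrable (fun y => H y * w x₀) lam :=
      intbl _ ((1 / w x₀) * (omg * L)) (hHm.mul measurable_const) (fun y => hHwabs y x₀)
    have m_i : Measurable fun v : Fin N → X => v i := measurable_pi_apply i
    have intP1 : Integrable (fun v : Fin N → X => G (v i) / c (v i)) μ :=
      intb _ 1 ((hGm.comp m_i).div (hcm.comp m_i))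
        (fun v => abs_le.mpr ⟨by linarith [hGc0 (v i)], hGc1 (v i)⟩)
    have intP2 : ∀ j : Fin N, Integrable (fun v : Fin N → X => H (v i) * w (v j)) μ := fun j =>
      intb _ ((1 / w x₀) * (omg * L))
        ((hHm.comp m_i).mul (hwm.comp (measurable_pi_apply j)))
        (fun v => hHwabs (v i) (v j))
    have intP0 : Integrable (fun v : Fin N → X => H (v i) * w x₀) μ :=
      intb _ ((1 / w x₀) * (omg * L)) ((hHm.comp m_i).mul measurable_const)
        (fun v => hHwabs (v i) x₀)
    have intSum : Integrable (fun v : Fin N → X => ∑ j ∈ E, H (v i) * w (v j)) μ :=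
      integrable_finset_sum E (fun j _ => intP2 j)
    have intG2 : Integrable
        (fun v : Fin N → X => H (v i) * w x₀ + ∑ j ∈ E, H (v i) * w (v j)) μ :=
      intP0.add intSum
    have hpt : ∀ v, 2 * (G (v i) / c (v i)) -
        (H (v i) * w x₀ + ∑ j ∈ E, H (v i) * w (v j)) ≤ T i v := by
      intro v
      rw [hTi v]
      have hdist : H (v i) * w x₀ + ∑ j ∈ E, H (v i) * w (v j) = H (v i) * S v := by
        rw [← Finset.mul_sum, ← mul_add]
      rw [hdist]
      show 2 * (G (v i) / c (v i)) - G (v i) / (c (v i)) ^ 2 * S v ≤ G (v i) / S v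
      exact isir_ineq_aux _ _ _ (hG0 _) (hc0 _) (hS0 v)
    have hmono : ∫ v, (2 * (G (v i) / c (v i)) -
          (H (v i) * w x₀ + ∑ j ∈ E, H (v i) * w (v j))) ∂μ ≤ ∫ v, T i v ∂μ :=
      integral_mono ((intP1.const_mul 2).sub intG2) (hTint i) hpt
    -- compute the left integral
    have e1 : ∫ v, G (v i) / c (v i) ∂μ = ∫ y, G y / c y ∂lam := pi_int_one lam i (fun y => G y / c y)
    have e0 : ∫ v, H (v i) * w x₀ ∂μ = ∫ y, H y * w x₀ ∂lam := pi_int_one lam i (fun y => H y * w x₀)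
    have e2i : ∫ v, H (v i) * w (v i) ∂μ = ∫ y, H y * w y ∂lam := pi_int_one lam i (fun y => H y * w y)
    have hc2 : ((E.erase i).card : ℝ) = (N : ℝ) - 2 := by
      rw [Finset.card_erase_of_mem hi, hcardEn]
      have h12 : N - 1 - 1 = N - 2 := by omega
      rw [h12, Nat.cast_sub hN]
      norm_num
    have esum : ∑ j ∈ E, ∫ v, H (v i) * w (v j) ∂μ
        = (∫ y, H y * w y ∂lam) + ((N : ℝ) - 2) * L * (∫ y, H y ∂lam) := by
      have h1 : ∑ j ∈ E, ∫ v, H (v i) * w (v j) ∂μ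
          = (∫ v, H (v i) * w (v i) ∂μ) + ∑ j ∈ E.erase i, ∫ v, H (v i) * w (v j) ∂μ :=
        (Finset.add_sum_erase E (fun j => ∫ v, H (v i) * w (v j) ∂μ) hi).symm
      have hrest : ∑ j ∈ E.erase i, ∫ v, H (v i) * w (v j) ∂μ
          = ((N : ℝ) - 2) * L * (∫ y, H y ∂lam) :=
        calc ∑ j ∈ E.erase i, ∫ v, H (v i) * w (v j) ∂μ
          = ∑ _j ∈ E.erase i, (∫ y, H y ∂lam) * L :=
            Finset.sum_congr rfl (fun j hj =>
              pi_int_two lam (Finset.ne_of_mem_erase hj) H w)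
        _ = ((E.erase i).card : ℝ) * ((∫ y, H y ∂lam) * L) := by
            rw [Finset.sum_const, nsmul_eq_mul]
        _ = ((N : ℝ) - 2) * L * (∫ y, H y ∂lam) := by rw [hc2]; ring
      rw [h1, e2i, hrest]
    have hsplit : ∫ v, (2 * (G (v i) / c (v i)) -
          (H (v i) * w x₀ + ∑ j ∈ E, H (v i) * w (v j))) ∂μ
        = 2 * (∫ y, G y / c y ∂lam) - ((∫ y, H y * w x₀ ∂lam) +
            ((∫ y, H y * w y ∂lam) + ((N : ℝ) - 2) * L * (∫ y, H y ∂lam))) := by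
      rw [integral_sub (intP1.const_mul 2) intG2, integral_const_mul _ _, e1,
        integral_add intP0 intSum, e0, integral_finset_sum E (fun j _ => intP2 j), esum]
    -- the identity ∫ H·c = ∫ G/c
    have hJ : ∫ y, H y * c y ∂lam = ∫ y, G y / c y ∂lam := by
      congr 1; funext y
      show G y / (c y) ^ 2 * c y = G y / c y
      have hcy := ne_of_gt (hc0 y)
      field_simp
    have hlin : ∫ y, H y * c y ∂lam = (∫ y, H y * w x₀ ∂lam) + (∫ y, H y * w y ∂lam)
        + ((N : ℝ) - 2) * L * (∫ y, H y ∂lam) := by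
      calc ∫ y, H y * c y ∂lam
          = ∫ y, (H y * w x₀ + H y * w y + (((N : ℝ) - 2) * L) * H y) ∂lam := by
            congr 1; funext y
            show H y * (w x₀ + w y + ((N : ℝ) - 2) * L) = _
            ring
        _ = (∫ y, H y * w x₀ ∂lam) + (∫ y, H y * w y ∂lam)
            + ((N : ℝ) - 2) * L * (∫ y, H y ∂lam) := by
            have intHxw : Integrable (fun y => H y * w x₀ + H y * w y) lam :=
              intHx.add intHw
            rw [integral_add intHxw (intH.const_mul (((N : ℝ) - 2) * L)),
              integral_add intHx intHw, integral_const_mul _ _]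
    -- B ≤ ∫ G/c
    have hGint : Integrable G lam := intbl _ (omg * L) hGm
      (fun y => abs_le.mpr ⟨by nlinarith [hG0 y, hL, homg1],
        le_trans (hGw y) (hwL y)⟩)
    have hBJ : B ≤ ∫ y, G y / c y ∂lam := by
      have hpt2 : ∀ y, G y / (D * L) ≤ G y / c y := fun y => by
        rw [div_le_div_iff₀ hDL (hc0 y)]
        exact mul_le_mul_of_nonneg_left (hcD y) (hG0 y)
      have hBe : B = ∫ y, G y / (D * L) ∂lam := by
        rw [integral_div, hintG, hBdef]
      rw [hBe]
      exact integral_mono (hGint.div_const _) intGc hpt2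
    calc B ≤ ∫ y, G y / c y ∂lam := hBJ
      _ = 2 * (∫ y, G y / c y ∂lam) - ((∫ y, H y * w x₀ ∂lam) +
            ((∫ y, H y * w y ∂lam) + ((N : ℝ) - 2) * L * (∫ y, H y ∂lam))) := by
          have h1 := hJ; have h2 := hlin; linarith
      _ = ∫ v, (2 * (G (v i) / c (v i)) -
            (H (v i) * w x₀ + ∑ j ∈ E, H (v i) * w (v j))) ∂μ := hsplit.symm
      _ ≤ ∫ v, T i v ∂μ := hmono
  calc ((N:ℝ) - 1) / D * ((∫ y in A, w y ∂lam) / L)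
      = (E.card : ℝ) * B := by
        rw [hcardE, hBdef]
        field_simp
    _ = E.card • B := by rw [nsmul_eq_mul]
    _ ≤ ∑ i ∈ E, ∫ v, T i v ∂μ := Finset.card_nsmul_le_sum E _ B hkey
    _ ≤ ∑ i, ∫ v, T i v ∂μ := by
        refine Finset.sum_le_sum_of_subset_of_nonneg (Finset.subset_univ E) ?_
        intro i _ _
        exact integral_nonneg (hT0 i)
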